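/- arXiv:2112.01710 — 4 statements merged into one kernel-verified Lean document; each statement's English description precedes it below -/
import Mathlib

section
/- Let Δ ≥ 1, let T be a tree with proper 2-coloring χ such that both color classes χ⁻¹(0) and χ⁻¹(1) contain a vertex of degree at least Δ in T. Let H be a Δ-uniform hypergraph with vertex–hyperedge incidence graph G. If S ⊆ V(H) is a vertex cover of H, then S (viewed as a subset of V(G)) is a T-transversal of G, i.e., the graph obtained from G by deleting the vertices of S contains no subgraph isomorphic to T. -/
/-- The vertex–hyperedge incidence graph of a membership relation `mem : α → β → Prop`:
the bipartite graph on `α ⊕ β` in which `Sum.inl a` is adjacent to `Sum.inr b`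
iff `mem a b`. -/
def incidenceGraph {α β : Type*} (mem : α → β → Prop) : SimpleGraph (α ⊕ β) where
  Adj x y := (∃ a b, x = Sum.inl a ∧ y = Sum.inr b ∧ mem a b) ∨
             (∃ a b, x = Sum.inr b ∧ y = Sum.inl a ∧ mem a b)
  symm := by
    constructor
    rintro x y (⟨a, b, rfl, rfl, h⟩ | ⟨a, b, rfl, rfl, h⟩)
    · exact Or.inr ⟨a, b, rfl, rfl, h⟩
    · exact Or.inl ⟨a, b, rfl, rfl, h⟩
  loopless := by
    constructor
    rintro x (⟨a, b, h1, h2, -⟩ | ⟨a, b, h1, h2, -⟩) <;> simp_all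

/-- `S` is a `T`-transversal of `G`: every copy of `T` in `G` (i.e. every injective graph
homomorphism from `T` to `G`) meets `S`. -/
def IsTTransversal {α β : Type*} (T : SimpleGraph α) (G : SimpleGraph β) (S : Set β) : Prop :=
  ∀ f : α → β, Function.Injective f → (∀ u v, T.Adj u v → G.Adj (f u) (f v)) →
    ∃ u, f u ∈ S

/-- Let `Δ ≥ 1` and let `T` be a tree whose proper 2-coloring `χ` has a vertex of degree at
least `Δ` in each color class.  If `S` is a vertex cover of a `Δ`-uniform hypergraph
`H = (V, E)`, then `S`, viewed inside the vertex–hyperedge incidence graph `G` of `H`, is a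
`T`-transversal of `G`. -/
theorem cover_gives_transversal {α V : Type*} [Fintype α]
    (Δ : ℕ) (hΔ : 1 ≤ Δ)
    (T : SimpleGraph α) [DecidableRel T.Adj] (htree : T.IsTree)
    (χ : α → Fin 2) (hχ : ∀ u v, T.Adj u v → χ u ≠ χ v)
    (h0 : ∃ v, χ v = 0 ∧ Δ ≤ T.degree v)
    (h1 : ∃ v, χ v = 1 ∧ Δ ≤ T.degree v)
    (E : Finset (Finset V)) (hunif : ∀ e ∈ E, e.card = Δ)
    (S : Set V) (hS : ∀ e ∈ E, ∃ v ∈ e, v ∈ S) :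
    IsTTransversal T
      (incidenceGraph (fun (v : V) (e : {e : Finset V // e ∈ E}) => v ∈ e.val))
      (Sum.inl '' S) := by
  classical
  intro f hinj hhom
  set side : (V ⊕ {e : Finset V // e ∈ E}) → Fin 2 := Sum.elim (fun _ => 0) (fun _ => 1)
    with hside
  have hedge : ∀ u v, T.Adj u v → side (f u) + side (f v) = 1 := by
    intro u v huv
    rcases hhom u v huv with ⟨a, b, h1, h2, -⟩ | ⟨a, b, h1, h2, -⟩ <;>
      simp [hside, h1, h2]
  set g : α → Fin 2 := fun u => χ u + side (f u) with hg
  have key : ∀ a b c d : Fin 2, a + b = 1 → c + d = 1 → a + c = b + d := by decide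
  have hgedge : ∀ u v, T.Adj u v → g u = g v := by
    intro u v huv
    have hc : χ u + χ v = 1 := by
      have h := hχ u v huv
      revert h; generalize χ u = a; generalize χ v = b; revert a b; decide
    exact key _ _ _ _ hc (hedge u v huv)
  have hconst : ∀ u v, g u = g v := by
    intro u v
    obtain ⟨w⟩ := htree.isConnected.preconnected u v
    induction w with
    | nil => rfl
    | cons h p ih => rw [← ih]; exact hgedge _ _ h
  obtain ⟨v0, hv0, hd0⟩ := h0
  obtain ⟨v1, hv1, hd1⟩ := h1
  have hone : ∃ v, Δ ≤ T.degree v ∧ ∃ e, f v = Sum.inr e := by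
    have hc := hconst v0 v1
    simp only [hg, hv0, hv1] at hc
    rcases hfv0 : f v0 with a | e
    · refine ⟨v1, hd1, ?_⟩
      rcases hfv1 : f v1 with a' | e'
      · exfalso; rw [hfv0, hfv1] at hc; simp [hside] at hc
      · exact ⟨e', rfl⟩
    · exact ⟨v0, hd0, e, hfv0⟩
  obtain ⟨v, hdv, e, hfv⟩ := hone
  have hnb : ∀ u ∈ T.neighborFinset v, ∃ a ∈ e.val, f u = Sum.inl a := by
    intro u hu
    rw [SimpleGraph.mem_neighborFinset] at hu
    rcases hhom v u hu with ⟨a, b, h1, h2, hm⟩ | ⟨a, b, h1, h2, hm⟩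
    · rw [hfv] at h1; exact absurd h1 (by simp)
    · rw [hfv] at h1
      injection h1 with h1; subst h1
      exact ⟨a, hm, h2⟩
  set φ : α → V := fun u => if h : ∃ a ∈ e.val, f u = Sum.inl a then h.choose else
    (hS e.val e.property).choose with hφ
  have hφ1 : ∀ u ∈ T.neighborFinset v, φ u ∈ e.val ∧ f u = Sum.inl (φ u) := by
    intro u hu
    have h := hnb u hu
    simp only [hφ, dif_pos h]
    exact ⟨h.choose_spec.1, h.choose_spec.2⟩
  have hsub : (T.neighborFinset v).image φ ⊆ e.val :=
    fun x hx => by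
      obtain ⟨u, hu, rfl⟩ := Finset.mem_image.mp hx
      exact (hφ1 u hu).1
  have hinjOn : Set.InjOn φ (T.neighborFinset v) := by
    intro x hx y hy hxy
    apply hinj
    rw [(hφ1 x hx).2, (hφ1 y hy).2, hxy]
  have hcard : e.val.card ≤ ((T.neighborFinset v).image φ).card := by
    rw [Finset.card_image_of_injOn hinjOn, hunif e.val e.property]
    exact hdv.trans (le_of_eq (T.card_neighborFinset_eq_degree v).symm)
  have heq : (T.neighborFinset v).image φ = e.val :=
    Finset.eq_of_subset_of_card_le hsub hcard
  obtain ⟨s, hse, hsS⟩ := hS e.val e.property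
  rw [← heq] at hse
  obtain ⟨u, hu, hus⟩ := Finset.mem_image.mp hse
  exact ⟨u, s, hsS, by rw [(hφ1 u hu).2, hus]⟩
end

section
/- Let T be a tree with proper 2-coloring χ such that both color classes of χ contain a vertex of degree at least Δ in T (i.e., Δ(T) ≥ Δ). Let H be a Δ-uniform hypergraph, let B, C ≥ 1, let H' be the B-blowup of H with each hyperedge duplicated C times, and let G be the vertex–hyperedge incidence graph of H'. Then the minimum size of a T-transversal of G is at most B times the minimum size of a vertex cover of H. -/
lemma fin2_helper : ∀ a b c : Fin 2, a ≠ b → (a = c ↔ ¬ b = c) := by decide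

lemma bool_helper : ∀ a b c : Bool, a ≠ b → (a = c ↔ ¬ b = c) := by decide

/-- Let `T` be a tree with proper 2-coloring `χ` having a vertex of degree at least `Δ`
in each color class (i.e. `Δ(T) ≥ Δ`).  Let `H = (V, E)` be a `Δ`-uniform hypergraph,
`B, C ≥ 1`, let `H'` be the `B`-blowup of `H` with each hyperedge duplicated `C` times, and
let `G` be the vertex–hyperedge incidence graph of `H'`.  Then the minimum size of a
`T`-transversal of `G` is at most `B` times the minimum size of a vertex cover of `H`. -/
theorem transversal_le_blowup_cover {α V : Type*} [Fintype α] [Fintype V] [DecidableEq V]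
    (Δ B C : ℕ) (hB : 1 ≤ B) (hC : 1 ≤ C)
    (T : SimpleGraph α) [DecidableRel T.Adj] (htree : T.IsTree)
    (χ : α → Fin 2) (hχ : ∀ u v, T.Adj u v → χ u ≠ χ v)
    (h0 : ∃ v, χ v = 0 ∧ Δ ≤ T.degree v)
    (h1 : ∃ v, χ v = 1 ∧ Δ ≤ T.degree v)
    (E : Finset (Finset V)) (hunif : ∀ e ∈ E, e.card = Δ) :
    sInf {n : ℕ | ∃ S : Finset ((V × Fin B) ⊕
          ({e' : Finset (V × Fin B) // e'.card = Δ ∧ e'.image Prod.fst ∈ E} × Fin C)),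
        IsTTransversal T
          (incidenceGraph (fun (p : V × Fin B)
              (ec : {e' : Finset (V × Fin B) // e'.card = Δ ∧ e'.image Prod.fst ∈ E} × Fin C)
              => p ∈ ec.1.val)) ↑S ∧ S.card = n}
      ≤ B * sInf {n : ℕ | ∃ S : Finset V, (∀ e ∈ E, ∃ v ∈ e, v ∈ S) ∧ S.card = n} := by
  classical
  obtain ⟨v0, hv0c, hv0d⟩ := h0
  obtain ⟨v1, hv1c, hv1d⟩ := h1
  set EC := {e' : Finset (V × Fin B) // e'.card = Δ ∧ e'.image Prod.fst ∈ E} × Fin C with hEC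
  set mem : V × Fin B → EC → Prop := fun p ec => p ∈ ec.1.val with hmem
  have hv01 : v0 ≠ v1 := by
    intro h; rw [h, hv1c] at hv0c; exact absurd hv0c (by decide)
  by_cases hΔ : Δ = 0
  · -- degenerate case: the incidence graph has no edges but T has an edge
    subst hΔ
    have h0mem : (0 : ℕ) ∈ {n : ℕ | ∃ S : Finset ((V × Fin B) ⊕ EC),
        IsTTransversal T (incidenceGraph mem) ↑S ∧ S.card = n} := by
      refine ⟨∅, ?_, rfl⟩
      intro f hinj hhom
      obtain ⟨w⟩ := (htree.isConnected.preconnected v0 v1)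
      cases w with
      | nil => exact absurd rfl hv01
      | cons h _ =>
        exfalso
        rcases hhom _ _ h with ⟨a, b, _, _, hm⟩ | ⟨a, b, _, _, hm⟩ <;>
        · have hb : b.1.val = ∅ := Finset.card_eq_zero.mp b.1.2.1
          simp only [hmem, hb] at hm
          exact absurd hm (Finset.notMem_empty a)
    exact le_trans (Nat.sInf_le h0mem) (Nat.zero_le _)
  · -- main case
    have hcovne : {n : ℕ | ∃ S : Finset V, (∀ e ∈ E, ∃ v ∈ e, v ∈ S) ∧ S.card = n}.Nonempty := by
      refine ⟨(Finset.univ : Finset V).card, Finset.univ, fun e he => ?_, rfl⟩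
      have : e.Nonempty := Finset.card_pos.mp (by rw [hunif e he]; omega)
      exact ⟨this.choose, this.choose_spec, Finset.mem_univ _⟩
    obtain ⟨S, hScov, hScard⟩ := Nat.sInf_mem hcovne
    set S' : Finset ((V × Fin B) ⊕ EC) := (S ×ˢ (Finset.univ : Finset (Fin B))).image Sum.inl
      with hS'
    have hS'card : S'.card = B * S.card := by
      rw [hS', Finset.card_image_of_injective _ Sum.inl_injective, Finset.card_product]
      simp [Fintype.card_fin, Nat.mul_comm]
    have htrans : IsTTransversal T (incidenceGraph mem) ↑S' := by
      intro f hinj hhom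
      -- adjacent vertices map to opposite sides
      have hside : ∀ u v, T.Adj u v → (f u).isLeft ≠ (f v).isLeft := by
        intro u v h
        rcases hhom _ _ h with ⟨a, b, h1, h2, -⟩ | ⟨a, b, h1, h2, -⟩ <;> rw [h1, h2] <;> simp
      have key : ∀ (x y : α) (w : T.Walk x y), (χ x = χ y ↔ (f x).isLeft = (f y).isLeft) := by
        intro x y w
        induction w with
        | nil => simp
        | @cons x b y h w ih =>
          rw [fin2_helper _ _ _ (hχ _ _ h), bool_helper _ _ _ (hside _ _ h)]
          exact not_congr ih
      -- main step: a vertex of degree ≥ Δ mapped into the right side yields a hit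
      have main : ∀ u : α, Δ ≤ T.degree u → ∀ ec : EC, f u = Sum.inr ec →
          ∃ w, f w ∈ ↑S' := by
        intro u hdeg ec hfu
        obtain ⟨v, hvE, hvS⟩ := hScov _ ec.1.2.2
        obtain ⟨p, hpe, hpv⟩ := Finset.mem_image.mp hvE
        set N := T.neighborFinset u with hN
        have himg : ∀ w ∈ N, ∃ a ∈ ec.1.val, f w = Sum.inl a := by
          intro w hw
          have hadj := hhom _ _ ((T.mem_neighborFinset u w).mp hw)
          rcases hadj with ⟨a, b, h1, h2, hm⟩ | ⟨a, b, h1, h2, hm⟩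
          · rw [hfu] at h1; exact absurd h1 (by simp)
          · rw [hfu] at h1
            have : b = ec := Sum.inr_injective h1.symm
            exact ⟨a, by rw [← this]; exact hm, h2⟩
        have hsub : N.image f ⊆ ec.1.val.image (Sum.inl : V × Fin B → (V × Fin B) ⊕ EC) := by
          intro x hx
          obtain ⟨w, hw, rfl⟩ := Finset.mem_image.mp hx
          obtain ⟨a, ha, hfw⟩ := himg w hw
          exact Finset.mem_image.mpr ⟨a, ha, hfw.symm⟩
        have hcard1 : (N.image f).card = T.degree u := by
          exact (Finset.card_image_of_injective (f := f) N hinj).trans (T.card_neighborFinset_eq_degree u)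
        have hcard2 : (ec.1.val.image (Sum.inl : V × Fin B → (V × Fin B) ⊕ EC)).card = Δ := by
          exact (Finset.card_image_of_injective ec.1.val
            (Sum.inl_injective (α := V × Fin B) (β := EC))).trans ec.1.2.1
        have heq : N.image f = ec.1.val.image (Sum.inl : V × Fin B → (V × Fin B) ⊕ EC) :=
          Finset.eq_of_subset_of_card_le hsub (by rw [hcard1, hcard2]; exact hdeg)
        have : Sum.inl p ∈ N.image f := by
          rw [heq]; exact Finset.mem_image_of_mem _ hpe
        obtain ⟨w, hw, hfw⟩ := Finset.mem_image.mp this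
        refine ⟨w, ?_⟩
        rw [hfw]
        refine Finset.mem_coe.mpr (Finset.mem_image_of_mem _ ?_)
        exact Finset.mem_product.mpr ⟨hpv ▸ hvS, Finset.mem_univ _⟩
      -- one of v0, v1 maps to the right side
      obtain ⟨w⟩ := (htree.isConnected.preconnected v0 v1)
      have hne : (f v0).isLeft ≠ (f v1).isLeft := by
        intro h
        have := (key v0 v1 w).mpr h
        rw [hv0c, hv1c] at this
        exact absurd this (by decide)
      rcases hfv0 : f v0 with p | ec
      · rcases hfv1 : f v1 with p' | ec'
        · exfalso; exact hne (by simp [hfv0, hfv1])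
        · exact main v1 hv1d ec' hfv1
      · exact main v0 hv0d ec hfv0
    calc sInf {n : ℕ | ∃ S : Finset ((V × Fin B) ⊕ EC),
          IsTTransversal T (incidenceGraph mem) ↑S ∧ S.card = n}
        ≤ S'.card := Nat.sInf_le ⟨S', htrans, rfl⟩
      _ = B * S.card := hS'card
      _ = B * sInf {n : ℕ | ∃ S : Finset V, (∀ e ∈ E, ∃ v ∈ e, v ∈ S) ∧ S.card = n} := by
          rw [hScard]
end

section
/- Let G be a finite simple graph, let T be a graph with k vertices, and let F ⊆ V(G) be a union of pairwise disjoint 'twin classes', where each twin class P ⊆ F is a set of pairwise nonadjacent vertices of G that all have the same open neighborhood in G. Let R ⊆ V(G) be a T-transversal of G such that every twin class P satisfies |P \ R| ≥ k. Then R \ F is also a T-transversal of G. -/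
/-- Let `T` have `k` vertices and let `F ⊆ V(G)` be a union of pairwise disjoint twin classes:
each class `P` consists of pairwise nonadjacent vertices sharing the same open neighborhood.
If `R` is a `T`-transversal of `G` such that every twin class `P` satisfies `|P \ R| ≥ k`,
then `R \ F` is also a `T`-transversal of `G`. -/
theorem transversal_avoids_twins {α β : Type*} [Fintype α] [Fintype β]
    (k : ℕ) (hk : Fintype.card α = k)
    (T : SimpleGraph α) (G : SimpleGraph β)
    (F : Set β) (P : Set (Set β))
    (hF : F = ⋃₀ P)
    (hdisj : P.Pairwise Disjoint)
    (hindep : ∀ Q ∈ P, ∀ u ∈ Q, ∀ v ∈ Q, ¬ G.Adj u v)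
    (htwin : ∀ Q ∈ P, ∀ u ∈ Q, ∀ v ∈ Q, G.neighborSet u = G.neighborSet v)
    (R : Set β) (hR : IsTTransversal T G R)
    (hsize : ∀ Q ∈ P, k ≤ (Q \ R).ncard) :
    IsTTransversal T G (R \ F) := by
  classical
  intro f hinj hhom
  have hcls : ∀ x, x ∈ F → ∃ Q, Q ∈ P ∧ x ∈ Q := by
    intro x hx
    rw [hF, Set.mem_sUnion] at hx
    exact hx
  choose! Qof hQP hQmem using hcls
  have hemb : ∀ Q : Set β, ∃ g : α → β,
      Q ∈ P → Function.Injective g ∧ ∀ a, g a ∈ Q \ R := by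
    intro Q
    by_cases hQ : Q ∈ P
    · have h1 : Fintype.card α ≤ Fintype.card (Q \ R : Set β) := by
        rw [hk, ← Nat.card_eq_fintype_card, Nat.card_coe_set_eq]
        exact hsize Q hQ
      obtain ⟨e⟩ := Function.Embedding.nonempty_of_card_le h1
      exact ⟨fun a => (e a : β), fun _ =>
        ⟨fun a b hab => e.injective (Subtype.ext hab), fun a => (e a).2⟩⟩
    · exact ⟨f, fun h => absurd h hQ⟩
  choose g hg using hemb
  set f' : α → β := fun u => if f u ∈ F then g (Qof (f u)) u else f u with hf'
  have hmemQ : ∀ u, f u ∈ F → f' u ∈ Qof (f u) \ R := by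
    intro u h
    simp only [hf', if_pos h]
    exact (hg _ (hQP _ h)).2 u
  have hnot : ∀ u, f u ∉ F → f' u = f u := by
    intro u h; simp only [hf', if_neg h]
  have hmemF : ∀ u, f u ∈ F → f' u ∈ F := by
    intro u h
    rw [hF]
    exact Set.mem_sUnion.mpr ⟨_, hQP _ h, (hmemQ u h).1⟩
  have hinj' : Function.Injective f' := by
    intro u v h
    by_cases hu : f u ∈ F <;> by_cases hv : f v ∈ F
    · by_cases hQQ : Qof (f u) = Qof (f v)
      · simp only [hf', if_pos hu, if_pos hv, hQQ] at h
        exact (hg _ (hQP _ hv)).1 h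
      · have h1 := hmemQ u hu
        have h2 := hmemQ v hv
        rw [h] at h1
        exact absurd h2.1 (Set.disjoint_left.mp (hdisj (hQP _ hu) (hQP _ hv) hQQ) h1.1)
    · exact absurd (h ▸ hmemF u hu) (by rw [hnot v hv]; exact hv)
    · exact absurd (h ▸ hmemF v hv) (by rw [hnot u hu]; exact hu)
    · rw [hnot u hu, hnot v hv] at h
      exact hinj h
  have hswap : ∀ u, G.neighborSet (f' u) = G.neighborSet (f u) := by
    intro u
    by_cases hu : f u ∈ F
    · exact htwin _ (hQP _ hu) _ (Set.diff_subset (hmemQ u hu)) _ (hQmem _ hu)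
    · rw [hnot u hu]
  have hhom' : ∀ u v, T.Adj u v → G.Adj (f' u) (f' v) := by
    intro u v huv
    have h1 : f v ∈ G.neighborSet (f' u) := by
      rw [hswap u]
      exact hhom u v huv
    have h2 : f' u ∈ G.neighborSet (f' v) := by
      rw [hswap v]
      exact h1.symm
    exact h2.symm
  obtain ⟨u, hu⟩ := hR f' hinj' hhom'
  by_cases h : f u ∈ F
  · exact absurd hu (hmemQ u h).2
  · exact ⟨u, (hnot u h) ▸ hu, h⟩
end

section
/- Let T be a tree with k vertices and Δ = Δ(T) ≥ 3. Let H be a Δ-uniform hypergraph, let w = k^{3k}, let B > w, and let C > 2·max(B·|V(H)|, k). Let H' be the B-blowup of H with each hyperedge duplicated C times, and let G be the vertex–hyperedge incidence graph of H'. Then the minimum size τ_T(G) of a T-transversal of G satisfies τ_T(G) ≥ τ(H) · (B − w), where τ(H) is the minimum size of a vertex cover of H. -/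
open Finset

section Aux

/-- `r`-th element of a finset (junk default out of range). -/
noncomputable def nthElt {V : Type*} [Inhabited V] (s : Finset V) (r : ℕ) : V :=
  s.toList.getD r default

lemma nthElt_mem {V : Type*} [Inhabited V] {s : Finset V} {r : ℕ} (h : r < s.card) :
    nthElt s r ∈ s := by
  have hl : r < s.toList.length := by rwa [Finset.length_toList]
  rw [nthElt, List.getD_eq_getElem _ _ hl]
  exact Finset.mem_toList.mp (List.getElem_mem hl)

lemma nthElt_inj {V : Type*} [Inhabited V] {s : Finset V} {r₁ r₂ : ℕ}
    (h₁ : r₁ < s.card) (h₂ : r₂ < s.card) (h : nthElt s r₁ = nthElt s r₂) : r₁ = r₂ := by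
  have hl₁ : r₁ < s.toList.length := by rwa [Finset.length_toList]
  have hl₂ : r₂ < s.toList.length := by rwa [Finset.length_toList]
  rw [nthElt, nthElt, List.getD_eq_getElem _ _ hl₁, List.getD_eq_getElem _ _ hl₂] at h
  exact s.nodup_toList.getElem_inj_iff.mp h

/-- Recursion along a depth function, stepping to the grand-parent. -/
noncomputable def cAux {α W : Type*} (d : α → ℕ) (pp : α → α)
    (hpp : ∀ u, ¬ d u ≤ 1 → d (pp u) < d u)
    (F : α → W) (G : α → W → W) (u : α) : W :=
  if h : d u ≤ 1 then F u else G u (cAux d pp hpp F G (pp u))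
termination_by d u
decreasing_by exact hpp u h

lemma cAux_eq {α W : Type*} (d : α → ℕ) (pp : α → α)
    (hpp : ∀ u, ¬ d u ≤ 1 → d (pp u) < d u)
    (F : α → W) (G : α → W → W) (u : α) :
    cAux d pp hpp F G u =
      if d u ≤ 1 then F u else G u (cAux d pp hpp F G (pp u)) := by
  rw [cAux]; split <;> rfl

/-- An injection (on `s`) from a finset `s` into a finset `t` of at least the same size. -/
lemma exists_injOn_finset {β γ : Type*} [DecidableEq β] [DecidableEq γ] [Nonempty γ]
    (s : Finset β) (t : Finset γ) (h : s.card ≤ t.card) :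
    ∃ f : β → γ, Set.InjOn f ↑s ∧ ∀ x ∈ s, f x ∈ t := by
  classical
  induction s using Finset.induction generalizing t with
  | empty => exact ⟨fun _ => Classical.arbitrary γ, by simp, by simp⟩
  | @insert a s ha ih =>
    have hcard : s.card + 1 ≤ t.card := by rwa [Finset.card_insert_of_notMem ha] at h
    have ht : t.Nonempty := Finset.card_pos.mp (by omega)
    obtain ⟨y, hy⟩ := ht
    obtain ⟨f, hfi, hft⟩ := ih (t.erase y) (by
      rw [Finset.card_erase_of_mem hy]; omega)
    refine ⟨Function.update f a y, ?_, ?_⟩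
    · intro x₁ hx₁ x₂ hx₂ heq
      simp only [Finset.coe_insert, Set.mem_insert_iff] at hx₁ hx₂
      rcases hx₁ with rfl | hx₁ <;> rcases hx₂ with rfl | hx₂
      · rfl
      · exfalso
        rw [Function.update_self, Function.update_of_ne (by rintro rfl; exact ha hx₂)] at heq
        exact (Finset.ne_of_mem_erase (hft _ hx₂)) heq.symm
      · exfalso
        rw [Function.update_self, Function.update_of_ne (by rintro rfl; exact ha hx₁)] at heq
        exact (Finset.ne_of_mem_erase (hft _ hx₁)) heq
      · rw [Function.update_of_ne (by rintro rfl; exact ha hx₁),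
          Function.update_of_ne (by rintro rfl; exact ha hx₂)] at heq
        exact hfi hx₁ hx₂ heq
    · intro x hx
      rcases Finset.mem_insert.mp hx with rfl | hx'
      · rw [Function.update_self]; exact hy
      · rw [Function.update_of_ne (by rintro rfl; exact ha hx')]
        exact Finset.mem_of_mem_erase (hft _ hx')

end Aux

lemma incidenceGraph_adj_left {α β : Type*} (mem : α → β → Prop) (a : α) (b : β)
    (h : mem a b) : (incidenceGraph mem).Adj (Sum.inl a) (Sum.inr b) :=
  Or.inl ⟨a, b, rfl, rfl, h⟩

lemma incidenceGraph_adj_right {α β : Type*} (mem : α → β → Prop) (a : α) (b : β)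
    (h : mem a b) : (incidenceGraph mem).Adj (Sum.inr b) (Sum.inl a) :=
  Or.inr ⟨a, b, rfl, rfl, h⟩

/-- Soundness: let `T` be a tree with `k` vertices and `Δ = Δ(T) ≥ 3` (where `Δ(T)` is computed
from a proper 2-coloring `χ` of `T`), let `H = (V, E)` be a `Δ`-uniform hypergraph,
`w = k^(3k)`, `B > w`, `C > 2·max(B·|V(H)|, k)`, and let `G` be the vertex–hyperedge incidence
graph of the `B`-blowup of `H` with each hyperedge duplicated `C` times.  Then
`τ_T(G) ≥ τ(H) · (B - w)`. -/
theorem soundness_lower_bound {α V : Type*} [Fintype α] [Fintype V] [DecidableEq V]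
    (k Δ B C : ℕ) (hk : Fintype.card α = k)
    (T : SimpleGraph α) [DecidableRel T.Adj] (htree : T.IsTree)
    (χ : α → Fin 2) (hχ : ∀ u v, T.Adj u v → χ u ≠ χ v)
    (hΔdef : Δ = min ((Finset.univ.filter fun v => χ v = 0).sup (fun v => T.degree v))
                     ((Finset.univ.filter fun v => χ v = 1).sup (fun v => T.degree v)))
    (hΔ3 : 3 ≤ Δ)
    (hB : k ^ (3 * k) < B) (hC : 2 * max (B * Fintype.card V) k < C)
    (E : Finset (Finset V)) (hunif : ∀ e ∈ E, e.card = Δ) :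
    sInf {n : ℕ | ∃ S : Finset V, (∀ e ∈ E, ∃ v ∈ e, v ∈ S) ∧ S.card = n} * (B - k ^ (3 * k))
      ≤ sInf {n : ℕ | ∃ S : Finset ((V × Fin B) ⊕
            ({e' : Finset (V × Fin B) // e'.card = Δ ∧ e'.image Prod.fst ∈ E} × Fin C)),
          IsTTransversal T
            (incidenceGraph (fun (p : V × Fin B)
                (ec : {e' : Finset (V × Fin B) // e'.card = Δ ∧ e'.image Prod.fst ∈ E} × Fin C)
                => p ∈ ec.1.val)) ↑S ∧ S.card = n} := by

  classical
  have hα : Nonempty α := htree.isConnected.nonempty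
  have hk1 : 1 ≤ k := by rw [← hk]; exact Fintype.card_pos
  set w := k ^ (3 * k) with hw
  have hkw : k ≤ w := Nat.le_self_pow (by omega) k
  have hw1 : 1 ≤ w := le_trans hk1 hkw
  haveI : NeZero B := ⟨by omega⟩
  -- the two sInf sets
  set τSet := {n : ℕ | ∃ S : Finset V, (∀ e ∈ E, ∃ v ∈ e, v ∈ S) ∧ S.card = n} with hτSet
  set G := incidenceGraph (fun (p : V × Fin B)
      (ec : {e' : Finset (V × Fin B) // e'.card = Δ ∧ e'.image Prod.fst ∈ E} × Fin C)
      => p ∈ ec.1.val) with hG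
  set 𝒮 := {n : ℕ | ∃ S : Finset ((V × Fin B) ⊕
      ({e' : Finset (V × Fin B) // e'.card = Δ ∧ e'.image Prod.fst ∈ E} × Fin C)),
      IsTTransversal T G ↑S ∧ S.card = n} with h𝒮
  have hτuniv : Fintype.card V ∈ τSet := by
    refine ⟨Finset.univ, fun e he => ?_, by simp⟩
    obtain ⟨v, hv⟩ := Finset.card_pos.mp (by rw [hunif e he]; omega)
    exact ⟨v, hv, Finset.mem_univ v⟩
  have hτle : sInf τSet ≤ Fintype.card V := Nat.sInf_le hτuniv
  have h𝒮ne : 𝒮.Nonempty := by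
    refine ⟨_, Finset.univ, fun f hinj hhom => ?_, rfl⟩
    obtain ⟨u⟩ := hα
    exact ⟨u, by simp⟩
  obtain ⟨S, hS, hSn⟩ := Nat.sInf_mem h𝒮ne
  rw [← hSn]
  by_contra hcon
  have hlt : S.card < sInf τSet * (B - w) := Nat.lt_of_not_le hcon
  -- counting: covered copies
  set cov : V → ℕ := fun v => ((univ : Finset (Fin B)).filter fun i => Sum.inl (v,i) ∈ S).card
    with hcovdef
  set Wc : Finset V := univ.filter (fun v => B - w ≤ cov v) with hWcdef
  have claimA : Wc.card * (B - w) ≤ S.card := by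
    set Fv : V → Finset ((V × Fin B) ⊕
        ({e' : Finset (V × Fin B) // e'.card = Δ ∧ e'.image Prod.fst ∈ E} × Fin C)) :=
      fun v => ((univ : Finset (Fin B)).filter fun i => Sum.inl (v,i) ∈ S).image
        (fun i => Sum.inl (v,i)) with hFv
    have hFvcard : ∀ v, (Fv v).card = cov v := by
      intro v
      exact Finset.card_image_of_injective _ (fun i j hij => by simpa using hij)
    have hFvsub : ∀ v, Fv v ⊆ S := by
      intro v x hx
      simp only [hFv, Finset.mem_image, Finset.mem_filter] at hx
      obtain ⟨i, ⟨-, hi⟩, rfl⟩ := hx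
      exact hi
    have hdisj : ∀ v₁ ∈ Wc, ∀ v₂ ∈ Wc, v₁ ≠ v₂ → Disjoint (Fv v₁) (Fv v₂) := by
      intro v₁ _ v₂ _ hne
      rw [Finset.disjoint_left]
      intro x h1 h2
      simp only [hFv, Finset.mem_image] at h1 h2
      obtain ⟨i, -, rfl⟩ := h1
      obtain ⟨j, -, hj⟩ := h2
      simp only [Sum.inl.injEq, Prod.mk.injEq] at hj
      exact hne hj.1.symm
    calc Wc.card * (B - w) ≤ ∑ v ∈ Wc, cov v := by
          have h := Finset.card_nsmul_le_sum Wc cov (B - w)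
            (fun v hv => (Finset.mem_filter.mp hv).2)
          simpa using h
      _ = ∑ v ∈ Wc, (Fv v).card := Finset.sum_congr rfl (fun v _ => (hFvcard v).symm)
      _ = (Wc.biUnion Fv).card := (Finset.card_biUnion hdisj).symm
      _ ≤ S.card := Finset.card_le_card (Finset.biUnion_subset.mpr (fun v _ => hFvsub v))
  have hBw : 0 < B - w := by omega
  have claimB : Wc.card < sInf τSet := by
    by_contra hb
    push_neg at hb
    have := Nat.mul_le_mul_right (B - w) hb
    omega
  have claimC : ∃ e ∈ E, ∀ v ∈ e, v ∉ Wc := by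
    by_contra hc
    push_neg at hc
    exact absurd (Nat.sInf_le (⟨Wc, hc, rfl⟩ : Wc.card ∈ τSet)) (Nat.not_le.mpr claimB)
  obtain ⟨e, he, hecov⟩ := claimC
  have hecard : e.card = Δ := hunif e he
  obtain ⟨v₀, hv₀⟩ := Finset.card_pos.mp (by rw [hecard]; omega)
  haveI : Inhabited V := ⟨v₀⟩
  haveI : Inhabited (Fin B) := ⟨⟨0, Nat.pos_of_ne_zero (NeZero.ne B)⟩⟩
  -- free copies
  set free : V → Finset (Fin B) := fun v => univ.filter fun i => Sum.inl (v,i) ∉ S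
    with hfreedef
  have hfree : ∀ v ∈ e, k ≤ (free v).card := by
    intro v hv
    have h1 : cov v < B - w := by
      have := hecov v hv
      rw [hWcdef] at this
      simp only [Finset.mem_filter, Finset.mem_univ, true_and, not_le] at this
      exact this
    have h2 : cov v + (free v).card = B := by
      have h3 := Finset.card_filter_add_card_filter_not
        (s := (univ : Finset (Fin B))) (p := fun i => Sum.inl (v,i) ∈ S)
      simpa [hfreedef, hcovdef] using h3
    omega
  -- label side
  have hSV : S.card < B * Fintype.card V := by
    calc S.card < sInf τSet * (B - w) := hlt
    _ ≤ Fintype.card V * B := Nat.mul_le_mul hτle (by omega)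
    _ = B * Fintype.card V := Nat.mul_comm _ _
  have hSkC : S.card + k ≤ C := by
    have h1 := le_max_left (B * Fintype.card V) k
    have h2 := le_max_right (B * Fintype.card V) k
    omega
  set bad : Finset (Fin C) := univ.filter (fun j => ∃ ed, Sum.inr (ed, j) ∈ S) with hbaddef
  have hbadcard : bad.card ≤ S.card := by
    refine Finset.card_le_card_of_injOn
      (fun j => if h : ∃ ed, Sum.inr (ed, j) ∈ S then Sum.inr (h.choose, j) else
        Sum.inl ((default : V), (default : Fin B))) ?_ ?_
    · intro j hj
      have h : ∃ ed, Sum.inr (ed, j) ∈ S := (Finset.mem_filter.mp hj).2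
      simp only []
      rw [dif_pos h]
      exact h.choose_spec
    · intro j₁ hj₁ j₂ hj₂ heq
      have h₁ : ∃ ed, Sum.inr (ed, j₁) ∈ S :=
        (Finset.mem_filter.mp (Finset.mem_coe.mp hj₁)).2
      have h₂ : ∃ ed, Sum.inr (ed, j₂) ∈ S :=
        (Finset.mem_filter.mp (Finset.mem_coe.mp hj₂)).2
      simp only [] at heq
      rw [dif_pos h₁, dif_pos h₂] at heq
      simp only [Sum.inr.injEq, Prod.mk.injEq] at heq
      exact heq.2
  set good : Finset (Fin C) := univ \ bad with hgooddef
  have hgoodcard : k ≤ good.card := by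
    rw [hgooddef, Finset.card_sdiff_of_subset (Finset.subset_univ bad)]
    simp only [Finset.card_univ, Fintype.card_fin]
    omega
  -- tree structure
  set s0 := (univ.filter fun v => χ v = (0 : Fin 2)).sup (fun v => T.degree v) with hs0
  set s1 := (univ.filter fun v => χ v = (1 : Fin 2)).sup (fun v => T.degree v) with hs1
  set i₀ : Fin 2 := if s0 ≤ s1 then 0 else 1 with hi₀
  have hsmall : ∀ u, χ u = i₀ → T.degree u ≤ Δ := by
    intro u hu
    have hmem : u ∈ univ.filter (fun v => χ v = i₀) :=
      Finset.mem_filter.mpr ⟨Finset.mem_univ u, hu⟩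
    rw [hi₀] at hmem
    rw [hΔdef]
    by_cases h : s0 ≤ s1
    · rw [if_pos h] at hmem
      have h2 := Finset.le_sup (f := fun v => T.degree v) hmem
      exact le_min h2 (le_trans h2 h)
    · rw [if_neg h] at hmem
      have h2 := Finset.le_sup (f := fun v => T.degree v) hmem
      exact le_min (le_trans h2 (le_of_not_ge h)) h2
  have hΔsup : Δ ≤ (univ.filter fun v => χ v = i₀).sup (fun v => T.degree v) := by
    rw [hΔdef, hi₀]
    by_cases h : s0 ≤ s1
    · rw [if_pos h]; exact min_le_left _ _
    · rw [if_neg h]; exact min_le_right _ _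
  have hrootex : (univ.filter fun v => χ v = i₀).Nonempty := by
    rw [Finset.nonempty_iff_ne_empty]
    intro hemp
    rw [hemp, Finset.sup_empty] at hΔsup
    simp only [Nat.bot_eq_zero] at hΔsup
    omega
  obtain ⟨root, hrootmem⟩ := hrootex
  have hroot : χ root = i₀ := (Finset.mem_filter.mp hrootmem).2
  set d : α → ℕ := fun u => T.dist root u with hd
  have hconn := htree.isConnected
  have hd0 : d root = 0 := by simp only [hd]; exact SimpleGraph.dist_self
  have hfin2 : ∀ a b c : Fin 2, a ≠ b → (a = c ↔ ¬ b = c) := by decide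
  have hwalkpar : ∀ (x y : α) (p : T.Walk x y), (χ x = χ y ↔ Even p.length) := by
    intro x y p
    induction p with
    | nil => simp
    | cons hab q ih =>
      rw [SimpleGraph.Walk.length_cons, Nat.even_add_one, ← ih]
      exact hfin2 _ _ _ (hχ _ _ hab)
  have hpar : ∀ u, (χ u = i₀ ↔ Even (d u)) := by
    intro u
    obtain ⟨p, hp⟩ := hconn.exists_walk_length_eq_dist root u
    simp only [hd]
    rw [← hp, ← hwalkpar root u p, ← hroot, eq_comm]
  have hdadj : ∀ u x, T.Adj u x → (d x = d u + 1 ∨ d u = d x + 1) := by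
    intro u x hux
    have h1 : d x ≤ d u + 1 := by
      simp only [hd]
      have h := hconn.dist_triangle (u := root) (v := u) (w := x)
      rwa [SimpleGraph.dist_eq_one_iff_adj.mpr hux] at h
    have h2 : d u ≤ d x + 1 := by
      simp only [hd]
      have h := hconn.dist_triangle (u := root) (v := x) (w := u)
      rwa [SimpleGraph.dist_eq_one_iff_adj.mpr hux.symm] at h
    have h3 : ¬ (Even (d u) ↔ Even (d x)) := by
      have hne := hχ u x hux
      have e1 := hpar u
      have e2 := hpar x
      have e3 := hfin2 (χ u) (χ x) i₀ hne
      tauto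
    have h4 : d u ≠ d x := fun hEq => h3 (iff_of_eq (congrArg Even hEq))
    omega
  have hparent_ex : ∀ u, 0 < d u → ∃ x, T.Adj x u ∧ d x + 1 = d u := by
    intro u hu
    have hur : u ≠ root := by rintro rfl; omega
    obtain ⟨p, hp⟩ := hconn.exists_walk_length_eq_dist root u
    obtain ⟨x, hadj, q, hq⟩ := SimpleGraph.Walk.exists_eq_cons_of_ne hur p.reverse
    have hlen : q.length + 1 = d u := by
      have h := congrArg SimpleGraph.Walk.length hq
      rw [SimpleGraph.Walk.length_reverse, SimpleGraph.Walk.length_cons, hp] at h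
      simp only [hd]
      omega
    have hdx : d x ≤ q.length := by
      simp only [hd]
      have h := SimpleGraph.dist_le q.reverse
      rwa [SimpleGraph.Walk.length_reverse] at h
    rcases hdadj u x hadj with h | h
    · omega
    · exact ⟨x, hadj.symm, by omega⟩
  have huniq : ∀ u x y, T.Adj x u → T.Adj y u → d x + 1 = d u → d y + 1 = d u → x = y := by
    intro u x y hx hy hdx hdy
    have getp : ∀ z, d z + 1 = d u → ∀ (hz : T.Adj z u),
        ∃ p : T.Walk z root, p.IsPath ∧ u ∉ p.support := by
      intro z hz _
      obtain ⟨p, hp⟩ := hconn.exists_walk_length_eq_dist z root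
      have hpath : p.IsPath := p.isPath_of_length_eq_dist hp
      refine ⟨p, hpath, fun hu => ?_⟩
      have h1 : T.dist u root ≤ (p.dropUntil u hu).length := SimpleGraph.dist_le _
      have h2 : (p.dropUntil u hu).length ≤ p.length := SimpleGraph.Walk.length_dropUntil_le p hu
      have h3 : T.dist z root = d z := by simp only [hd]; exact SimpleGraph.dist_comm
      have h4 : T.dist u root = d u := by simp only [hd]; exact SimpleGraph.dist_comm
      omega
    obtain ⟨px, hpx, hux⟩ := getp x hdx hx
    obtain ⟨py, hpy, huy⟩ := getp y hdy hy
    have h1 : (SimpleGraph.Walk.cons hx.symm px).IsPath := hpx.cons hux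
    have h2 : (SimpleGraph.Walk.cons hy.symm py).IsPath := hpy.cons huy
    obtain ⟨p₀, -, hup⟩ := htree.existsUnique_path u root
    have heq : SimpleGraph.Walk.cons hx.symm px = SimpleGraph.Walk.cons hy.symm py :=
      (hup _ h1).trans (hup _ h2).symm
    have h5 := congrArg (fun p => SimpleGraph.Walk.getVert p 1) heq
    simpa [SimpleGraph.Walk.getVert_cons_succ] using h5
  have hparent_ex' : ∀ u, ∃ x, 0 < d u → (T.Adj x u ∧ d x + 1 = d u) := by
    intro u
    by_cases h : 0 < d u
    · obtain ⟨x, h1, h2⟩ := hparent_ex u h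
      exact ⟨x, fun _ => ⟨h1, h2⟩⟩
    · exact ⟨root, fun h' => absurd h' h⟩
  choose par hparu using hparent_ex'
  have hparu' : ∀ u x, T.Adj x u → d x + 1 = d u → x = par u := by
    intro u x hx hdx
    have h : 0 < d u := by omega
    exact huniq u x (par u) hx (hparu u h).1 hdx (hparu u h).2
  -- ranks among siblings
  set enum : α → ℕ := fun a => (Fintype.equivFin α a : ℕ) with henumdef
  have henum : Function.Injective enum := by
    intro a b h
    exact (Fintype.equivFin α).injective (Fin.ext h)
  set childs : α → Finset α := fun p => univ.filter (fun x => T.Adj p x ∧ d x = d p + 1)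
    with hchdef
  set rank : α → ℕ := fun u => ((childs (par u)).filter fun x => enum x < enum u).card
    with hrkdef
  have hmemch : ∀ u, 0 < d u → u ∈ childs (par u) := by
    intro u hu
    simp only [hchdef, Finset.mem_filter]
    exact ⟨Finset.mem_univ u, (hparu u hu).1, by have := (hparu u hu).2; omega⟩
  have hrank_lt : ∀ u, 0 < d u → rank u + 1 ≤ (childs (par u)).card := by
    intro u hu
    have hsub : (childs (par u)).filter (fun x => enum x < enum u) ⊆ (childs (par u)).erase u := by
      intro x hx
      simp only [Finset.mem_filter] at hx
      exact Finset.mem_erase.mpr ⟨by rintro rfl; exact absurd hx.2 (lt_irrefl _), hx.1⟩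
    have h1 := Finset.card_le_card hsub
    rw [Finset.card_erase_of_mem (hmemch u hu)] at h1
    have h2 : 0 < (childs (par u)).card := Finset.card_pos.mpr ⟨u, hmemch u hu⟩
    simp only [hrkdef]
    omega
  have hch_le : ∀ p, χ p = i₀ → (childs p).card ≤ Δ := by
    intro p hp
    have hsub : childs p ⊆ T.neighborFinset p := by
      intro x hx
      simp only [hchdef, Finset.mem_filter] at hx
      exact (T.mem_neighborFinset p x).mpr hx.2.1
    calc (childs p).card ≤ (T.neighborFinset p).card := Finset.card_le_card hsub
      _ = T.degree p := rfl
      _ ≤ Δ := hsmall p hp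
  have hch_lt : ∀ p, χ p = i₀ → 0 < d p → (childs p).card + 1 ≤ Δ := by
    intro p hp hdp
    have hparp := hparu p hdp
    have hsub : childs p ⊆ (T.neighborFinset p).erase (par p) := by
      intro x hx
      simp only [hchdef, Finset.mem_filter] at hx
      refine Finset.mem_erase.mpr ⟨?_, (T.mem_neighborFinset p x).mpr hx.2.1⟩
      rintro rfl
      have h1 := hparp.2
      have h2 := hx.2.2
      omega
    have h1 := Finset.card_le_card hsub
    rw [Finset.card_erase_of_mem ((T.mem_neighborFinset p (par p)).mpr hparp.1.symm)] at h1
    have h2 : 0 < (T.neighborFinset p).card :=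
      Finset.card_pos.mpr ⟨par p, (T.mem_neighborFinset p (par p)).mpr hparp.1.symm⟩
    have hdeg : (T.neighborFinset p).card = T.degree p := rfl
    have h3 := hsmall p hp
    omega
  -- the colouring of the odd side by vertices of e
  have hpp : ∀ u, ¬ d u ≤ 1 → d (par (par u)) < d u := by
    intro u hu
    have h1 := (hparu u (by omega)).2
    have h2 := (hparu (par u) (by omega)).2
    omega
  set c : α → V := cAux d (fun u => par (par u)) hpp
    (fun u => nthElt e (rank u)) (fun u w' => nthElt (e.erase w') (rank u)) with hcdef
  have hceq : ∀ u, c u = if d u ≤ 1 then nthElt e (rank u)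
      else nthElt (e.erase (c (par (par u)))) (rank u) := by
    intro u
    rw [hcdef]
    exact cAux_eq _ _ _ _ _ u
  have hrank1 : ∀ u, d u = 1 → rank u < e.card := by
    intro u h1
    have h0 : 0 < d u := by omega
    have ha := hrank_lt u h0
    have hc' := (hparu u h0).2
    have hz : d (par u) = 0 := by omega
    have hb := hch_le (par u) ((hpar (par u)).mpr (by rw [hz]; exact Even.zero))
    rw [hecard]
    omega
  have hoddpos : ∀ u, ¬ Even (d u) → 0 < d u := by
    intro u hu
    rcases Nat.eq_zero_or_pos (d u) with h | h
    · exact absurd (by rw [h]; exact Even.zero) hu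
    · exact h
  have hrank2 : ∀ u, ¬ Even (d u) → 2 ≤ d u → ∀ w' ∈ e, rank u < (e.erase w').card := by
    intro u hodd h2 w' hw'
    have h0 : 0 < d u := hoddpos u hodd
    have hdp : d (par u) + 1 = d u := (hparu u h0).2
    have hχpar : χ (par u) = i₀ := by
      refine (hpar (par u)).mpr ?_
      rw [Nat.even_iff] at hodd ⊢
      omega
    have ha := hrank_lt u h0
    have hb := hch_lt (par u) hχpar (by omega)
    rw [Finset.card_erase_of_mem hw', hecard]
    omega
  have hcmem : ∀ n u, d u = n → ¬ Even (d u) → c u ∈ e := by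
    intro n
    induction n using Nat.strong_induction_on with
    | _ n ih =>
      intro u hdu hodd
      rcases le_or_gt (d u) 1 with h1 | h1
      · have hd1 : d u = 1 := by
          have h0 := hoddpos u hodd
          omega
        rw [hceq u, if_pos h1]
        exact nthElt_mem (hrank1 u hd1)
      · have p1 := (hparu u (by omega)).2
        have p2 := (hparu (par u) (by omega)).2
        have hodd' : ¬ Even (d (par (par u))) := by
          rw [Nat.even_iff] at hodd ⊢
          omega
        have hgp : c (par (par u)) ∈ e :=
          ih (d (par (par u))) (by omega) _ rfl hodd'
        rw [hceq u, if_neg (by omega)]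
        exact (Finset.erase_subset _ _) (nthElt_mem (hrank2 u hodd (by omega) _ hgp))
  have hrkinj : ∀ p u₁ u₂, u₁ ∈ childs p → u₂ ∈ childs p → u₁ ≠ u₂ → rank u₁ ≠ rank u₂ := by
    have key : ∀ p u₁ u₂, u₁ ∈ childs p → u₂ ∈ childs p → enum u₁ < enum u₂ →
        rank u₁ < rank u₂ := by
      intro p u₁ u₂ h₁ h₂ hlt
      have hm₁ := h₁
      have hm₂ := h₂
      simp only [hchdef, Finset.mem_filter] at hm₁ hm₂
      have hp₁ : p = par u₁ := hparu' u₁ p hm₁.2.1 (by omega)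
      have hp₂ : p = par u₂ := hparu' u₂ p hm₂.2.1 (by omega)
      simp only [hrkdef]
      rw [← hp₁, ← hp₂]
      apply Finset.card_lt_card
      have hsub : (childs p).filter (fun x => enum x < enum u₁) ⊆
          (childs p).filter (fun x => enum x < enum u₂) := by
        intro x hx
        simp only [Finset.mem_filter] at hx ⊢
        exact ⟨hx.1, lt_trans hx.2 hlt⟩
      refine (Finset.ssubset_iff_of_subset hsub).mpr ⟨u₁, ?_, ?_⟩
      · simp only [Finset.mem_filter]
        exact ⟨h₁, hlt⟩
      · simp only [Finset.mem_filter]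
        rintro ⟨-, hcon'⟩
        exact absurd hcon' (lt_irrefl _)
    intro p u₁ u₂ h₁ h₂ hne
    rcases lt_trichotomy (enum u₁) (enum u₂) with h | h | h
    · exact Nat.ne_of_lt (key p u₁ u₂ h₁ h₂ h)
    · exact absurd (henum h) hne
    · exact (Nat.ne_of_lt (key p u₂ u₁ h₂ h₁ h)).symm
  have hcinj : ∀ p u₁ u₂, Even (d p) → T.Adj p u₁ → T.Adj p u₂ → u₁ ≠ u₂ → c u₁ ≠ c u₂ := by
    intro p u₁ u₂ hEv h₁ h₂ hne
    have hcase : ∀ u', T.Adj p u' →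
        (u' ∈ childs p ∧ d u' = d p + 1) ∨ (d u' + 1 = d p ∧ u' = par p) := by
      intro u' h'
      rcases hdadj p u' h' with h | h
      · left
        refine ⟨?_, h⟩
        simp only [hchdef, Finset.mem_filter]
        exact ⟨Finset.mem_univ _, h', h⟩
      · right
        exact ⟨by omega, hparu' p u' h'.symm (by omega)⟩
    have hoddpar : 0 < d p → ¬ Even (d (par p)) := by
      intro h0 hcon'
      have := (hparu p h0).2
      rw [Nat.even_iff] at hcon' hEv
      omega
    have hkey2 : ∀ x y, x ∈ childs p → d x = d p + 1 → y = par p → 0 < d p → c x ≠ c y := by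
      intro x y hcx hdx hey h0
      have hdp2 : 2 ≤ d p := by
        rw [Nat.even_iff] at hEv
        omega
      have hoddx : ¬ Even (d x) := by
        intro hcon'
        rw [Nat.even_iff] at hcon' hEv
        omega
      have hmx := hcx
      simp only [hchdef, Finset.mem_filter] at hmx
      have hpx : p = par x := hparu' x p hmx.2.1 (by omega)
      have hgpmem : c (par p) ∈ e := hcmem _ (par p) rfl (hoddpar h0)
      rw [hceq x, if_neg (by omega), ← hpx, hey]
      intro hEq
      have hmem' := nthElt_mem (hrank2 x hoddx (by omega) _ hgpmem)
      rw [hEq] at hmem'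
      exact (Finset.mem_erase.mp hmem').1 rfl
    rcases hcase u₁ h₁ with ⟨hc₁, hd₁⟩ | ⟨hd₁, he₁⟩ <;>
      rcases hcase u₂ h₂ with ⟨hc₂, hd₂⟩ | ⟨hd₂, he₂⟩
    · -- both children
      have hm₁ := hc₁
      have hm₂ := hc₂
      simp only [hchdef, Finset.mem_filter] at hm₁ hm₂
      have hp₁ : p = par u₁ := hparu' u₁ p hm₁.2.1 (by omega)
      have hp₂ : p = par u₂ := hparu' u₂ p hm₂.2.1 (by omega)
      have hrne := hrkinj p u₁ u₂ hc₁ hc₂ hne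
      rcases Nat.eq_zero_or_pos (d p) with h0 | h0
      · rw [hceq u₁, hceq u₂, if_pos (by omega), if_pos (by omega)]
        intro hEq
        exact hrne (nthElt_inj (hrank1 u₁ (by omega)) (hrank1 u₂ (by omega)) hEq)
      · have hdp2 : 2 ≤ d p := by
          rw [Nat.even_iff] at hEv
          omega
        have hodd₁ : ¬ Even (d u₁) := by
          intro hcon'
          rw [Nat.even_iff] at hcon' hEv
          omega
        have hodd₂ : ¬ Even (d u₂) := by
          intro hcon'
          rw [Nat.even_iff] at hcon' hEv
          omega
        have hgpmem : c (par p) ∈ e := hcmem _ (par p) rfl (hoddpar h0)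
        rw [hceq u₁, hceq u₂, if_neg (by omega), if_neg (by omega), ← hp₁, ← hp₂]
        intro hEq
        exact hrne (nthElt_inj (hrank2 u₁ hodd₁ (by omega) _ hgpmem)
          (hrank2 u₂ hodd₂ (by omega) _ hgpmem) hEq)
    · exact hkey2 u₁ u₂ hc₁ hd₁ he₂ (by omega)
    · exact (hkey2 u₂ u₁ hc₂ hd₂ he₁ (by omega)).symm
    · rw [he₁, he₂] at hne
      exact absurd rfl hne
  -- choose free copies for odd vertices
  have hodds : ∀ v : V, ∃ g : α → Fin B,
      v ∈ e → (Set.InjOn g ↑(univ.filter (fun u => ¬ Even (d u) ∧ c u = v)) ∧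
        ∀ x ∈ univ.filter (fun u => ¬ Even (d u) ∧ c u = v), g x ∈ free v) := by
    intro v
    by_cases hv : v ∈ e
    · obtain ⟨g, h1, h2⟩ := exists_injOn_finset (univ.filter (fun u => ¬ Even (d u) ∧ c u = v))
        (free v) (le_trans (le_trans (Finset.card_filter_le _ _)
          (by rw [Finset.card_univ, hk])) (hfree v hv))
      exact ⟨g, fun _ => ⟨h1, h2⟩⟩
    · exact ⟨fun _ => default, fun h => absurd h hv⟩
  choose gdx hgdx using hodds
  set idx : α → Fin B := fun u => gdx (c u) u with hidxdef
  have hidxfree : ∀ u, ¬ Even (d u) → Sum.inl (c u, idx u) ∉ S := by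
    intro u hu
    have hce : c u ∈ e := hcmem (d u) u rfl hu
    have hmm : u ∈ univ.filter (fun x => ¬ Even (d x) ∧ c x = c u) :=
      Finset.mem_filter.mpr ⟨Finset.mem_univ _, hu, rfl⟩
    have hmem' := (hgdx (c u) hce).2 u hmm
    simp only [hfreedef, Finset.mem_filter] at hmem'
    exact hmem'.2
  have hidxinj : ∀ u₁ u₂, ¬ Even (d u₁) → ¬ Even (d u₂) →
      (c u₁, idx u₁) = (c u₂, idx u₂) → u₁ = u₂ := by
    intro u₁ u₂ h₁ h₂ hEq
    obtain ⟨hcc, hii⟩ := Prod.ext_iff.mp hEq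
    simp only at hcc hii
    have hce : c u₁ ∈ e := hcmem _ u₁ rfl h₁
    have hm₁ : u₁ ∈ univ.filter (fun x => ¬ Even (d x) ∧ c x = c u₁) :=
      Finset.mem_filter.mpr ⟨Finset.mem_univ _, h₁, rfl⟩
    have hm₂ : u₂ ∈ univ.filter (fun x => ¬ Even (d x) ∧ c x = c u₁) :=
      Finset.mem_filter.mpr ⟨Finset.mem_univ _, h₂, hcc.symm⟩
    have hii' : gdx (c u₁) u₁ = gdx (c u₁) u₂ := by
      simp only [hidxdef] at hii
      rw [← hcc] at hii
      exact hii
    exact (hgdx (c u₁) hce).1 (Finset.mem_coe.mpr hm₁) (Finset.mem_coe.mpr hm₂) hii'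
  -- labels for even vertices
  haveI : Nonempty (Fin C) := ⟨⟨0, by omega⟩⟩
  obtain ⟨lab, hlabinj, hlabmem⟩ := exists_injOn_finset (univ.filter (fun u => Even (d u))) good
    (le_trans (le_trans (Finset.card_filter_le _ _) (by rw [Finset.card_univ, hk])) hgoodcard)
  have hlabgood : ∀ u, Even (d u) → ∀ ed, Sum.inr (ed, lab u) ∉ S := by
    intro u hu ed hcon'
    have hm := hlabmem u (Finset.mem_filter.mpr ⟨Finset.mem_univ _, hu⟩)
    rw [hgooddef] at hm
    exact (Finset.mem_sdiff.mp hm).2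
      (Finset.mem_filter.mpr ⟨Finset.mem_univ _, ⟨ed, hcon'⟩⟩)
  -- the blown-up hyperedges
  set E' : α → Finset (V × Fin B) := fun u =>
    ((T.neighborFinset u).image fun x => (c x, idx x)) ∪
      ((e \ ((T.neighborFinset u).image c)).image fun v => (v, (default : Fin B))) with hE'def
  have hE'facts : ∀ u, Even (d u) → (E' u).card = Δ ∧ (E' u).image Prod.fst = e := by
    intro u hu
    have hodds' : ∀ x ∈ T.neighborFinset u, ¬ Even (d x) := by
      intro x hx
      have hadj := (T.mem_neighborFinset u x).mp hx
      rcases hdadj u x hadj with h | h <;>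
        · intro hcon'
          rw [Nat.even_iff] at hcon' hu
          omega
    have hNsub : (T.neighborFinset u).image c ⊆ e := by
      intro v hv
      obtain ⟨x, hx, rfl⟩ := Finset.mem_image.mp hv
      exact hcmem _ x rfl (hodds' x hx)
    have hcinjN : Set.InjOn c ↑(T.neighborFinset u) := by
      intro x hx y hy hxy
      by_contra hne'
      exact hcinj u x y hu ((T.mem_neighborFinset u x).mp (Finset.mem_coe.mp hx))
        ((T.mem_neighborFinset u y).mp (Finset.mem_coe.mp hy)) hne' hxy
    have hinjpair : Set.InjOn (fun x => (c x, idx x)) ↑(T.neighborFinset u) := by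
      intro x hx y hy hxy
      exact hcinjN hx hy (congrArg Prod.fst hxy)
    have hb1 : ((T.neighborFinset u).image fun x => (c x, idx x)).card =
        (T.neighborFinset u).card := Finset.card_image_of_injOn hinjpair
    have hb2 : (((T.neighborFinset u).image fun x => (c x, idx x)).image Prod.fst) =
        (T.neighborFinset u).image c := by
      rw [Finset.image_image]
      rfl
    have hc1 : ((e \ ((T.neighborFinset u).image c)).image
        fun v => (v, (default : Fin B))).card
        = e.card - ((T.neighborFinset u).image c).card := by
      rw [Finset.card_image_of_injective _ (fun a b h => (Prod.ext_iff.mp h).1),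
        Finset.card_sdiff_of_subset hNsub]
    have hc2 : (((e \ ((T.neighborFinset u).image c)).image
        fun v => (v, (default : Fin B))).image Prod.fst) =
        e \ ((T.neighborFinset u).image c) := by
      rw [Finset.image_image]
      have hid : (Prod.fst ∘ fun v : V => (v, (default : Fin B))) = id := rfl
      rw [hid, Finset.image_id]
    have hdisj : Disjoint ((T.neighborFinset u).image fun x => (c x, idx x))
        ((e \ ((T.neighborFinset u).image c)).image fun v => (v, (default : Fin B))) := by
      rw [Finset.disjoint_left]
      intro p hp hq
      obtain ⟨x, hx, rfl⟩ := Finset.mem_image.mp hp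
      obtain ⟨v, hv, hEq⟩ := Finset.mem_image.mp hq
      have hvv : v = c x := (Prod.ext_iff.mp hEq).1
      rw [hvv] at hv
      exact (Finset.mem_sdiff.mp hv).2 (Finset.mem_image_of_mem c hx)
    have hdegΔ : T.degree u ≤ Δ := hsmall u ((hpar u).mpr hu)
    have hdeg' : (T.neighborFinset u).card = T.degree u := rfl
    have hccard : ((T.neighborFinset u).image c).card = (T.neighborFinset u).card :=
      Finset.card_image_of_injOn hcinjN
    constructor
    · simp only [hE'def]
      rw [Finset.card_union_of_disjoint hdisj, hb1, hc1, hccard, hecard]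
      omega
    · simp only [hE'def]
      rw [Finset.image_union, hb2, hc2]
      exact Finset.union_sdiff_of_subset hNsub
  have hE'card : ∀ u, Even (d u) → (E' u).card = Δ := fun u hu => (hE'facts u hu).1
  have hE'mem : ∀ u, Even (d u) → (E' u).image Prod.fst ∈ E := by
    intro u hu
    rw [(hE'facts u hu).2]
    exact he
  -- the embedding of T
  set f : α → (V × Fin B) ⊕
      ({e' : Finset (V × Fin B) // e'.card = Δ ∧ e'.image Prod.fst ∈ E} × Fin C) :=
    fun u => if hu : Even (d u) then Sum.inr (⟨E' u, hE'card u hu, hE'mem u hu⟩, lab u)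
      else Sum.inl (c u, idx u) with hfdef
  have hfinj : Function.Injective f := by
    intro u₁ u₂ hEq
    simp only [hfdef] at hEq
    by_cases h₁ : Even (d u₁) <;> by_cases h₂ : Even (d u₂)
    · rw [dif_pos h₁, dif_pos h₂] at hEq
      simp only [Sum.inr.injEq, Prod.mk.injEq] at hEq
      exact hlabinj (Finset.mem_coe.mpr (Finset.mem_filter.mpr ⟨Finset.mem_univ _, h₁⟩))
        (Finset.mem_coe.mpr (Finset.mem_filter.mpr ⟨Finset.mem_univ _, h₂⟩)) hEq.2
    · rw [dif_pos h₁, dif_neg h₂] at hEq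
      exact absurd hEq (by simp)
    · rw [dif_neg h₁, dif_pos h₂] at hEq
      exact absurd hEq (by simp)
    · rw [dif_neg h₁, dif_neg h₂] at hEq
      simp only [Sum.inl.injEq] at hEq
      exact hidxinj u₁ u₂ h₁ h₂ hEq
  have hfhom : ∀ u v', T.Adj u v' → G.Adj (f u) (f v') := by
    intro u v' hadj
    have hpair : Even (d u) ↔ ¬ Even (d v') := by
      have e1 := hpar u
      have e2 := hpar v'
      have e3 := hfin2 (χ u) (χ v') i₀ (hχ u v' hadj)
      rw [← e1, ← e2]
      exact e3
    by_cases hu : Even (d u)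
    · have hv'' : ¬ Even (d v') := hpair.mp hu
      have hfu : f u = Sum.inr (⟨E' u, hE'card u hu, hE'mem u hu⟩, lab u) := by
        simp only [hfdef]
        rw [dif_pos hu]
      have hfv : f v' = Sum.inl (c v', idx v') := by
        simp only [hfdef]
        rw [dif_neg hv'']
      have hmemE : (c v', idx v') ∈ E' u := by
        simp only [hE'def]
        exact Finset.mem_union_left _
          (Finset.mem_image_of_mem _ ((T.mem_neighborFinset u v').mpr hadj))
      rw [hfu, hfv, hG]
      exact incidenceGraph_adj_right _ _ _ hmemE
    · have hv'' : Even (d v') := by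
        by_contra hcon'
        exact hu (hpair.mpr hcon')
      have hfu : f u = Sum.inl (c u, idx u) := by
        simp only [hfdef]
        rw [dif_neg hu]
      have hfv : f v' = Sum.inr (⟨E' v', hE'card v' hv'', hE'mem v' hv''⟩, lab v') := by
        simp only [hfdef]
        rw [dif_pos hv'']
      have hmemE : (c u, idx u) ∈ E' v' := by
        simp only [hE'def]
        exact Finset.mem_union_left _
          (Finset.mem_image_of_mem _ ((T.mem_neighborFinset v' u).mpr hadj.symm))
      rw [hfu, hfv, hG]
      exact incidenceGraph_adj_left _ _ _ hmemE
  obtain ⟨u, hu⟩ := hS f hfinj hfhom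
  by_cases hev : Even (d u)
  · simp only [hfdef] at hu
    rw [dif_pos hev] at hu
    exact hlabgood u hev _ (Finset.mem_coe.mp hu)
  · simp only [hfdef] at hu
    rw [dif_neg hev] at hu
    exact hidxfree u hev (Finset.mem_coe.mp hu)
end
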